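/- Consider a k-FAT obstruction H_k with k > 2. If the positions of the pre-drawn intervals of x_k and y_k are swapped, then the resulting configuration contains a 1-FAT obstruction with x'_1 = y_k, y'_1 = x_k, and z'_1 = z_k. Furthermore, if k = 2 and the swapped configuration contains no such 1-FAT obstruction, then x_2 is adjacent to t_2. -/

import Mathlib

/-!
Common framework: interval representations, partial representations,
MPQ-tree Q-nodes (abstracted), the left-forcing relation `⊲`, and the
named obstruction configurations from Klavík–Saitoh,
"Minimal obstructions for partial representations of interval graphs"
(arXiv:1406.6228).
-/

namespace IntervalObstruction

variable {V : Type*}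

/-- An interval representation of a simple graph `G`: each vertex gets a nonempty
closed bounded interval `[l v, r v]`, and distinct vertices are adjacent iff their
intervals intersect. -/
structure IntRep (V : Type*) (G : SimpleGraph V) where
  l : V → ℝ
  r : V → ℝ
  hle : ∀ v, l v ≤ r v
  adj_iff : ∀ u v : V, u ≠ v →
    (G.Adj u v ↔ (Set.Icc (l u) (r u) ∩ Set.Icc (l v) (r v)).Nonempty)

/-- A partial representation: a set of pre-drawn vertices together with their
pre-drawn closed intervals. -/
structure PartialRep (V : Type*) where
  dom : Set V
  l : V → ℝ
  r : V → ℝ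
  hle : ∀ v ∈ dom, l v ≤ r v

/-- `R` extends the partial representation `R'`. -/
def IntRep.Extends {G : SimpleGraph V} (R : IntRep V G) (R' : PartialRep V) : Prop :=
  ∀ v ∈ R'.dom, R.l v = R'.l v ∧ R.r v = R'.r v

/-- A maximal clique of `G`. -/
def IsMaxClique (G : SimpleGraph V) (a : Set V) : Prop :=
  G.IsClique a ∧ ∀ b : Set V, G.IsClique b → a ⊆ b → b = a

/-- The set of possible positions of the clique-point of `a` in the
representation `R` (the common intersection of the intervals of `a`). -/
def IntRep.region {G : SimpleGraph V} (R : IntRep V G) (a : Set V) : Set ℝ :=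
  ⋂ v ∈ a, Set.Icc (R.l v) (R.r v)

/-- In the representation `R`, the clique-point of `a` lies strictly to the left
of the clique-point of `b`. -/
def Before {G : SimpleGraph V} (R : IntRep V G) (a b : Set V) : Prop :=
  ∀ p ∈ R.region a, ∀ q ∈ R.region b, p < q

/-- `a ⊲ b` : every representation extending `R'` places the clique-point of `a`
strictly to the left of the clique-point of `b`. -/
def ForcedLeft (G : SimpleGraph V) (R' : PartialRep V) (a b : Set V) : Prop :=
  ∀ R : IntRep V G, R.Extends R' → Before R a b

/-- `I_a` : the set of positions where the clique-point of `a` can be placed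
in some extension of `R'`. -/
def ISet (G : SimpleGraph V) (R' : PartialRep V) (a : Set V) : Set ℝ :=
  {p | ∃ R : IntRep V G, R.Extends R' ∧ p ∈ R.region a}

/-- `↷(a)` : the right endpooint of `I_a`. -/
noncomputable def rightEnd (G : SimpleGraph V) (R' : PartialRep V) (a : Set V) : ℝ :=
  sSup (ISet G R' a)

/-- `A` lies entirely to the left of `B`. -/
def SetLeftOf (A B : Set ℝ) : Prop := ∀ p ∈ A, ∀ q ∈ B, p < q

/-- `P(a)` : the pre-drawn vertices of the clique `a`. -/
def Pre (R' : PartialRep V) (a : Set V) : Set V := a ∩ R'.dom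

/-- The pre-drawn intervals of `u` and `v` are disjoint. -/
def DisjPre (R' : PartialRep V) (u v : V) : Prop :=
  R'.r u < R'.l v ∨ R'.r v < R'.l u

/-- The pre-drawn interval of `y` lies entirely between those of `x` and `z`
(in one of the two possible orientations). -/
def StrictBetween (R' : PartialRep V) (x y z : V) : Prop :=
  (R'.r x < R'.l y ∧ R'.r y < R'.l z) ∨ (R'.r z < R'.l y ∧ R'.r y < R'.l x)

/-- The pre-drawn intervals of `u` and `v` single overlap: they intersect and
neither contains the other. -/
def SingleOverlap (R' : PartialRep V) (u v : V) : Prop :=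
  (R'.l u < R'.l v ∧ R'.l v ≤ R'.r u ∧ R'.r u < R'.r v) ∨
  (R'.l v < R'.l u ∧ R'.l u ≤ R'.r v ∧ R'.r v < R'.r u)

/-- Abstraction of a Q-node of the MPQ-tree of `G`: the maximal cliques of the
subtree `T[Q]` are distributed into `n ≥ 3` ordered children subtrees (recorded
by `idx`), and in every representation of `G` the cliques appear either in the
order of the children or in the reversed order. `verts` is the vertex set of
`G[Q]`. -/
structure QNode (V : Type*) (G : SimpleGraph V) where
  n : ℕ
  hn : 3 ≤ n
  verts : Set V
  cliques : Set (Set V)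
  maximal : ∀ a ∈ cliques, IsMaxClique G a
  sub : ∀ a ∈ cliques, a ⊆ verts
  idx : Set V → Fin n
  twoOrders : ∀ R : IntRep V G,
    (∀ a ∈ cliques, ∀ b ∈ cliques, idx a < idx b → Before R a b) ∨
    (∀ a ∈ cliques, ∀ b ∈ cliques, idx a < idx b → Before R b a)

/-- The Q-node is obstructed: neither the order of its children nor its reversal
is compatible with `⊲`. -/
def QNode.Obstructed {G : SimpleGraph V} (Q : QNode V G) (R' : PartialRep V) : Prop :=
  (∃ a ∈ Q.cliques, ∃ b ∈ Q.cliques, Q.idx a < Q.idx b ∧ ForcedLeft G R' a b) ∧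
  (∃ a ∈ Q.cliques, ∃ b ∈ Q.cliques, Q.idx a < Q.idx b ∧ ForcedLeft G R' b a)

/-- A (finite) set `S` of maximal cliques of the Q-node creates an obstruction:
already the `⊲`-relations among the cliques of `S` are incompatible with both
admissible orderings of the Q-node. -/
def QNode.CreatesObstruction {G : SimpleGraph V} (Q : QNode V G) (R' : PartialRep V)
    (S : Finset (Set V)) : Prop :=
  ↑S ⊆ Q.cliques ∧
  (∃ a ∈ S, ∃ b ∈ S, Q.idx a < Q.idx b ∧ ForcedLeft G R' a b) ∧
  (∃ a ∈ S, ∃ b ∈ S, Q.idx a < Q.idx b ∧ ForcedLeft G R' b a)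

/-- The Q-node is obstructed by the three maximal cliques `a`, `b`, `c`. -/
def QNode.ObstructedBy {G : SimpleGraph V} (Q : QNode V G) (R' : PartialRep V)
    (a b c : Set V) : Prop :=
  a ∈ Q.cliques ∧ b ∈ Q.cliques ∧ c ∈ Q.cliques ∧
  (∃ p ∈ ({a, b, c} : Set (Set V)), ∃ q ∈ ({a, b, c} : Set (Set V)),
      Q.idx p < Q.idx q ∧ ForcedLeft G R' p q) ∧
  (∃ p ∈ ({a, b, c} : Set (Set V)), ∃ q ∈ ({a, b, c} : Set (Set V)),
      Q.idx p < Q.idx q ∧ ForcedLeft G R' q p)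

/-- The graph-theoretic core of a `k`-FAT obstruction with distinguished triple
`(x_k, y_k, z_k)` and vertex set `S`, defined inductively.  The base case is the
`1`-FAT configuration: a path from `x₁` to `z₁` whose inner vertices avoid the
neighbourhood of `y₁`.  The inductive step adds `x_{k+1}`, `t_{k+1}` and a path
`P_{k+1}` from `x_{k+1}` to `t_{k+1}` to a `k`-FAT core on
`(x_k, y_k, z_k) = (x', z_{k+1}, y_{k+1})`, where `t_{k+1}` is adjacent to the
whole previous configuration except `x'`. -/
inductive KFATCore (G : SimpleGraph V) : ℕ → V → V → V → Set V → Prop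
  | base (x y z : V) (p : G.Walk x z)
      (hxy : ¬ G.Adj x y) (hyz : ¬ G.Adj y z) (hxz : ¬ G.Adj x z)
      (hxy' : x ≠ y) (hzy' : z ≠ y) (hxz' : x ≠ z)
      (hp : ∀ w ∈ p.support, w ≠ x → w ≠ z → ¬ G.Adj y w ∧ w ≠ y) :
      KFATCore G 1 x y z (insert y {w | w ∈ p.support})
  | step (k : ℕ) (x y z t x' : V) (S : Set V) (p : G.Walk x t)
      (prev : KFATCore G k x' z y S)
      (hx'S : x' ∈ S)
      (ht : ∀ w ∈ S, w ≠ x' → G.Adj t w)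
      (htx' : ¬ G.Adj t x')
      (hxy : ¬ G.Adj x y) (hxz : ¬ G.Adj x z)
      (hxy' : x ≠ y) (hxz' : x ≠ z)
      (hp : ∀ w ∈ p.support, w ≠ t → (∀ s ∈ S, ¬ G.Adj w s) ∧ w ∉ S) :
      KFATCore G (k + 1) x y z (S ∪ {w | w ∈ p.support})

/-- A `1`-FAT obstruction with the distinguished pre-drawn triple `(x, y, z)`. -/
def ContainsOneFATAt (G : SimpleGraph V) (R' : PartialRep V) (x y z : V) : Prop :=
  x ∈ R'.dom ∧ y ∈ R'.dom ∧ z ∈ R'.dom ∧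
  ¬ G.Adj x y ∧ ¬ G.Adj y z ∧ ¬ G.Adj x z ∧ x ≠ y ∧ y ≠ z ∧ x ≠ z ∧
  DisjPre R' x y ∧ DisjPre R' y z ∧ DisjPre R' x z ∧ StrictBetween R' x y z ∧
  ∃ p : G.Walk x z, ∀ w ∈ p.support, w ≠ x → w ≠ z → ¬ G.Adj y w ∧ w ≠ y

/-- `G` and `R'` contain an SE obstruction: two pre-drawn single-overlapping
intervals `x`, `z` together with a path from the private left side of `x` to the
private right side of `z` avoiding both neighbourhoods. -/
def ContainsSE (G : SimpleGraph V) (R' : PartialRep V) : Prop :=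
  ∃ x z u v : V, x ∈ R'.dom ∧ z ∈ R'.dom ∧ G.Adj x z ∧
    R'.l x < R'.l z ∧ R'.l z ≤ R'.r x ∧ R'.r x < R'.r z ∧
    G.Adj u x ∧ ¬ G.Adj u z ∧ G.Adj v z ∧ ¬ G.Adj v x ∧
    ∃ p : G.Walk u v, ∀ w ∈ p.support, w ≠ u → w ≠ v →
      ¬ G.Adj w x ∧ ¬ G.Adj w z ∧ w ≠ x ∧ w ≠ z

/-- `G` and `R'` contain a `k`-FAT obstruction. -/
def ContainsKFAT (G : SimpleGraph V) (R' : PartialRep V) (k : ℕ) : Prop :=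
  ∃ x y z S, KFATCore G k x y z S ∧
    x ∈ R'.dom ∧ y ∈ R'.dom ∧ z ∈ R'.dom ∧
    DisjPre R' x y ∧ DisjPre R' y z ∧ DisjPre R' x z ∧ StrictBetween R' x y z

/-- `G` and `R'` contain a `k`-BI obstruction: a `k`-FAT core whose middle vertex
`y` is not pre-drawn but is forced between `x` and `z` by a pre-drawn common
neighbour `u` stretching from `x` to `z`. -/
def ContainsKBI (G : SimpleGraph V) (R' : PartialRep V) (k : ℕ) : Prop :=
  ∃ x y z S u, KFATCore G k x y z S ∧
    x ∈ R'.dom ∧ z ∈ R'.dom ∧ u ∈ R'.dom ∧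
    G.Adj u y ∧ ¬ G.Adj x y ∧ ¬ G.Adj z y ∧
    R'.r x < R'.l z ∧ R'.l x ≤ R'.l u ∧ R'.r u ≤ R'.r z

/-- `G` and `R'` contain a `k`-FB obstruction. -/
def ContainsKFB (G : SimpleGraph V) (R' : PartialRep V) (k : ℕ) : Prop :=
  ∃ x y z S u v, KFATCore G k x y z S ∧
    x ∈ R'.dom ∧ z ∈ R'.dom ∧ u ∈ R'.dom ∧ v ∈ R'.dom ∧
    G.Adj u y ∧ G.Adj v y ∧ G.Adj v z ∧ ¬ G.Adj x y ∧ ¬ G.Adj z y ∧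
    R'.r x < R'.l z ∧ R'.l x ≤ R'.l u ∧ R'.r u ≤ R'.r z ∧ R'.r z < R'.r v

/-- `G` and `R'` contain a `k`-EFB obstruction. -/
def ContainsKEFB (G : SimpleGraph V) (R' : PartialRep V) (k : ℕ) : Prop :=
  ∃ x y z S u v, KFATCore G k x y z S ∧
    x ∈ R'.dom ∧ z ∈ R'.dom ∧ u ∈ R'.dom ∧ v ∈ R'.dom ∧
    G.Adj u y ∧ G.Adj v y ∧ G.Adj u x ∧ G.Adj v z ∧ ¬ G.Adj x y ∧ ¬ G.Adj z y ∧
    R'.r x < R'.l z ∧ R'.l u < R'.l x ∧ R'.r z < R'.r v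

/-- `G` and `R'` contain a `k`-FS obstruction. -/
def ContainsKFS (G : SimpleGraph V) (R' : PartialRep V) (k : ℕ) : Prop :=
  ∃ x y z S u, KFATCore G k x y z S ∧
    x ∈ R'.dom ∧ y ∈ R'.dom ∧ u ∈ R'.dom ∧
    G.Adj u z ∧ ¬ G.Adj y z ∧ ¬ G.Adj x y ∧
    R'.r x < R'.l y ∧ R'.l y ≤ R'.l u ∧ R'.l u ≤ R'.r y ∧ R'.r y < R'.r u

/-- `G` and `R'` contain a `k`-EFS obstruction. -/
def ContainsKEFS (G : SimpleGraph V) (R' : PartialRep V) (k : ℕ) : Prop :=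
  ∃ x y z S u v, KFATCore G k x y z S ∧
    x ∈ R'.dom ∧ y ∈ R'.dom ∧ u ∈ R'.dom ∧ v ∈ R'.dom ∧
    G.Adj u z ∧ G.Adj v y ∧ G.Adj v z ∧ ¬ G.Adj y z ∧ ¬ G.Adj x y ∧
    R'.r x < R'.l y ∧ R'.l v < R'.l y ∧ R'.l y ≤ R'.l u ∧ R'.l u ≤ R'.r y

/-- `G` and `R'` contain a `k`-FDS obstruction. -/
def ContainsKFDS (G : SimpleGraph V) (R' : PartialRep V) (k : ℕ) : Prop :=
  ∃ x y z S u v, KFATCore G k x y z S ∧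
    y ∈ R'.dom ∧ u ∈ R'.dom ∧ v ∈ R'.dom ∧
    G.Adj u x ∧ G.Adj v y ∧ G.Adj v z ∧ ¬ G.Adj y z ∧ ¬ G.Adj x y ∧
    R'.r u < R'.l y ∧ R'.l y ≤ R'.l v

/-- `G` and `R'` contain a `k`-EFDS obstruction. -/
def ContainsKEFDS (G : SimpleGraph V) (R' : PartialRep V) (k : ℕ) : Prop :=
  ∃ x y z S u v w, KFATCore G k x y z S ∧
    y ∈ R'.dom ∧ u ∈ R'.dom ∧ v ∈ R'.dom ∧ w ∈ R'.dom ∧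
    G.Adj u x ∧ G.Adj v y ∧ G.Adj v z ∧ G.Adj w z ∧ ¬ G.Adj y z ∧ ¬ G.Adj x y ∧
    R'.r u < R'.l y ∧ R'.l v < R'.l y ∧ R'.r v < R'.r w

/-- `G` and `R'` contain a `k`-FNS obstruction. -/
def ContainsKFNS (G : SimpleGraph V) (R' : PartialRep V) (k : ℕ) : Prop :=
  ∃ x y z S u v w, KFATCore G k x y z S ∧
    y ∈ R'.dom ∧ u ∈ R'.dom ∧ v ∈ R'.dom ∧ w ∈ R'.dom ∧
    G.Adj u x ∧ G.Adj v y ∧ G.Adj v z ∧ G.Adj w z ∧ ¬ G.Adj y z ∧ ¬ G.Adj x y ∧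
    R'.r u < R'.l y ∧ R'.l w ≤ R'.r v ∧ R'.l v ≤ R'.r w

/-- `G` and `R'` contain a `(k, ℓ)`-CE obstruction: two symmetric FAT cores on
the triples `(x, y, z)` and `(y, x, z)` whose free vertices `x`, `y` are tied to
the pre-drawn vertex `z` via a common pre-drawn neighbour `u` single overlapping
`z`. -/
def ContainsKLCE (G : SimpleGraph V) (R' : PartialRep V) (k l : ℕ) : Prop :=
  ∃ x y z u S S', KFATCore G k x y z S ∧ KFATCore G l y x z S' ∧
    z ∈ R'.dom ∧ u ∈ R'.dom ∧
    G.Adj u x ∧ G.Adj u y ∧ G.Adj u z ∧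
    ¬ G.Adj x y ∧ ¬ G.Adj y z ∧ ¬ G.Adj x z ∧
    SingleOverlap R' u z

/-- Flipping a partial representation (the horizontal mirror image). -/
def PartialRep.flip (R' : PartialRep V) : PartialRep V where
  dom := R'.dom
  l := fun v => - R'.r v
  r := fun v => - R'.l v
  hle := fun v hv => neg_le_neg (R'.hle v hv)

-- Swapping the positions of the pre-drawn intervals of `x` and `y`.
open Classical in
noncomputable def PartialRep.swap (R' : PartialRep V) (x y : V)
    (hx : x ∈ R'.dom) (hy : y ∈ R'.dom) : PartialRep V where
  dom := R'.dom
  l := fun v => if v = x then R'.l y else if v = y then R'.l x else R'.l v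
  r := fun v => if v = x then R'.r y else if v = y then R'.r x else R'.r v
  hle := by
    intro v hv
    by_cases h1 : v = x
    · simpa [h1] using R'.hle y hy
    · by_cases h2 : v = y
      · have h3 : y ≠ x := fun hyx => h1 (h2.trans hyx)
        simpa [h1, h2, h3] using R'.hle x hx
      · simpa [h1, h2] using R'.hle v hv

/-- Reversing a Q-node. -/
def QNode.reverse {G : SimpleGraph V} (Q : QNode V G) : QNode V G where
  n := Q.n
  hn := Q.hn
  verts := Q.verts
  cliques := Q.cliques
  maximal := Q.maximal
  sub := Q.sub
  idx := fun a => (Q.idx a).rev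
  twoOrders := by
    intro R
    rcases Q.twoOrders R with h | h
    · right
      intro a ha b hb hlt
      exact h b hb a ha (Fin.rev_lt_rev.mp hlt)
    · left
      intro a ha b hb hlt
      exact h b hb a ha (Fin.rev_lt_rev.mp hlt)

end IntervalObstruction

namespace IntervalObstruction

/-- The distinguished triple of a `k`-FAT core belongs to its vertex set. -/
lemma kfat_mem {V : Type*} {G : SimpleGraph V} {k : ℕ} {a b c : V} {S : Set V}
    (h : KFATCore G k a b c S) : a ∈ S ∧ b ∈ S ∧ c ∈ S := by
  induction h with
  | base x y z p hxy hyz hxz hxy' hzy' hxz' hp =>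
    exact ⟨Or.inr p.start_mem_support, Or.inl rfl, Or.inr p.end_mem_support⟩
  | step k x y z t x' S p prev hx'S ht htx' hxy hxz hxy' hxz' hp ih =>
    exact ⟨Or.inr p.start_mem_support, Or.inl ih.2.2, Or.inl ih.2.1⟩

/-- Basic distinctness/non-adjacency facts carried by a `k`-FAT core. -/
lemma kfat_props {V : Type*} {G : SimpleGraph V} {k : ℕ} {a b c : V} {S : Set V}
    (h : KFATCore G k a b c S) : a ≠ b ∧ a ≠ c ∧ ¬ G.Adj a b ∧ ¬ G.Adj a c := by
  cases h with
  | base x y z p hxy hyz hxz hxy' hzy' hxz' hp => exact ⟨hxy', hxz', hxy, hxz⟩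
  | step k x y z t x' S p prev hx'S ht htx' hxy hxz hxy' hxz' hp =>
    exact ⟨hxy', hxz', hxy, hxz⟩

/-- **Lemma (swapping `x_k` and `y_k` in a `k`-FAT obstruction).**
Consider a `k`-FAT obstruction with distinguished pre-drawn triple `(x, y, z)`.
If the positions of the pre-drawn intervals of `x` and `y` are swapped, then
for `k > 2` the new configuration contains a `1`-FAT obstruction for
`x'₁ = y`, `y'₁ = x` and `z'₁ = z`.  Further, if `k = 2` and this does not
happen, then `x₂` is adjacent to `t₂`. -/
theorem k_fat_swap {V : Type*} {G : SimpleGraph V}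
    (R' : PartialRep V) (x y z : V)
    (hx : x ∈ R'.dom) (hy : y ∈ R'.dom) (hz : z ∈ R'.dom)
    (hd1 : DisjPre R' x y) (hd2 : DisjPre R' y z) (hd3 : DisjPre R' x z)
    (hbtw : StrictBetween R' x y z)
    (hxy : ¬ G.Adj x y) (hyz : ¬ G.Adj y z) (hxz : ¬ G.Adj x z)
    (hxy' : x ≠ y) (hyz' : y ≠ z) (hxz' : x ≠ z) :
    (∀ (k : ℕ) (S : Set V), 2 < k → KFATCore G k x y z S →
        ContainsOneFATAt G (R'.swap x y hx hy) y x z) ∧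
    (∀ (x' t : V) (S₀ : Set V) (p : G.Walk x t),
        KFATCore G 1 x' z y S₀ → x' ∈ S₀ →
        (∀ w ∈ S₀, w ≠ x' → G.Adj t w) → ¬ G.Adj t x' →
        (∀ w ∈ p.support, w ≠ t → (∀ s ∈ S₀, ¬ G.Adj w s) ∧ w ∉ S₀) →
        ¬ ContainsOneFATAt G (R'.swap x y hx hy) y x z →
        G.Adj x t) := by
  have hyx : y ≠ x := hxy'.symm
  have hzx : z ≠ x := hxz'.symm
  have hzy : z ≠ y := hyz'.symm
  -- The common combinatorial core: a middle vertex `t'` adjacent to `y` and `z`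
  -- but avoiding `x` yields the desired 1-FAT obstruction.
  have key : ∀ t' : V, G.Adj t' y → G.Adj t' z → ¬ G.Adj x t' → t' ≠ x →
      ContainsOneFATAt G (R'.swap x y hx hy) y x z := by
    intro t' h1 h2 h3 h4
    have e1 : (R'.swap x y hx hy).l x = R'.l y := by simp [PartialRep.swap]
    have e2 : (R'.swap x y hx hy).r x = R'.r y := by simp [PartialRep.swap]
    have e3 : (R'.swap x y hx hy).l y = R'.l x := by simp [PartialRep.swap, hyx]
    have e4 : (R'.swap x y hx hy).r y = R'.r x := by simp [PartialRep.swap, hyx]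
    have e5 : (R'.swap x y hx hy).l z = R'.l z := by simp [PartialRep.swap, hzx, hzy]
    have e6 : (R'.swap x y hx hy).r z = R'.r z := by simp [PartialRep.swap, hzx, hzy]
    refine ⟨hy, hx, hz, fun h => hxy h.symm, hxz, hyz, hyx, hxz', hyz', ?_, ?_, ?_, ?_, ?_⟩
    · show _ < _ ∨ _ < _
      rw [e1, e2, e3, e4]; exact hd1
    · show _ < _ ∨ _ < _
      rw [e1, e2, e5, e6]; exact hd2
    · show _ < _ ∨ _ < _
      rw [e3, e4, e5, e6]; exact hd3
    · show (_ < _ ∧ _ < _) ∨ (_ < _ ∧ _ < _)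
      rw [e1, e2, e3, e4, e5, e6]; exact hbtw
    · refine ⟨SimpleGraph.Walk.cons h1.symm (SimpleGraph.Walk.cons h2 SimpleGraph.Walk.nil), ?_⟩
      intro w hw hwy hwz
      simp only [SimpleGraph.Walk.support_cons, SimpleGraph.Walk.support_nil,
        List.mem_cons, List.mem_singleton] at hw
      rcases hw with rfl | rfl | rfl | h
      · exact absurd rfl hwy
      · exact ⟨h3, h4⟩
      · exact absurd rfl hwz
      · exact absurd h (List.not_mem_nil (a := w))
  constructor
  · -- k > 2
    intro k S hk hcore
    cases hcore with
    | base _ _ _ p hxy0 hyz0 hxz0 hxy0' hzy0' hxz0' hp => omega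
    | step m x₀ y₀ z₀ t x' S₁ p prev hx'S ht htx' hxy0 hxz0 hxy0' hxz0' hp =>
      -- prev : KFATCore G m x' z y S₁, with 2 < m + 1, so m ≥ 2 and prev is a step.
      have hyS₁ : y ∈ S₁ := (kfat_mem prev).2.2
      have hx'y : x' ≠ y := (kfat_props prev).2.1
      have hty : G.Adj t y := ht y hyS₁ (fun h => hx'y h.symm)
      have hxt : x ≠ t := by
        rintro rfl
        exact hxy hty
      obtain ⟨hxadj, hxS₁⟩ := hp x p.start_mem_support hxt
      cases prev with
      | base _ _ _ q hxy1 hyz1 hxz1 hxy1' hzy1' hxz1' hq => omega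
      | step m' x₁ y₁ z₁ t' x'' S₀ q prevprev hx''S ht' ht'x'' hxy1 hxz1 hxy1' hxz1' hq =>
        -- prevprev : KFATCore G m' x'' y z S₀; t' is adjacent to all of S₀ except x''.
        have hmem := kfat_mem prevprev
        have hprops := kfat_props prevprev
        have ht'y : G.Adj t' y := ht' y hmem.2.1 (fun h => hprops.1 h.symm)
        have ht'z : G.Adj t' z := ht' z hmem.2.2 (fun h => hprops.2.1 h.symm)
        have ht'S₁ : t' ∈ S₀ ∪ {w | w ∈ q.support} := Or.inr q.end_mem_support
        exact key t' ht'y ht'z (hxadj t' ht'S₁) (fun h => hxS₁ (h ▸ ht'S₁))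
  · -- k = 2
    intro x' t S₀ p hbase hx'S ht htx' hp hno
    by_contra hxt
    have hmem := kfat_mem hbase
    have hprops := kfat_props hbase
    -- hbase : KFATCore G 1 x' z y S₀, so z, y ∈ S₀ with x' ≠ z, x' ≠ y.
    have hty : G.Adj t y := ht y hmem.2.2 (fun h => hprops.2.1 h.symm)
    have htz : G.Adj t z := ht z hmem.2.1 (fun h => hprops.1 h.symm)
    have htx : t ≠ x := by
      rintro rfl
      exact hxy hty
    exact hno (key t hty htz hxt htx)

end IntervalObstruction
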